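/- Let m ≥ 2 be an integer, let φ be a real number, and set n = 2^m − 1 and φ_m = 2^{m−1}·φ. Then the following identity of complex numbers holds: 1 + n·exp(−i·φ_m) = exp(−i·(φ − 2·arctan( sin(φ_m) / (n + cos(φ_m)) ))) · ( exp(−i·n·φ) + n·exp(−i·(φ_m − φ)) ). (This is the exact phase relation underlying Lemma 1: post-selected transversal application of R_z(−φ) on the quantum Reed–Muller code QRM(1,m) produces, up to a global phase, a logical Z-rotation by φ' = φ − 2·arctan( sin(φ_m) / (2^m − 1 + cos(φ_m)) ), where the logical |0⟩ amplitude acquires the factor 1 + n·exp(−i·φ_m) and the logical |1⟩ amplitude acquires the factor exp(−i·n·φ) + n·exp(−i·(φ_m − φ)).) -/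

import Mathlib

open Complex Real

lemma qrm_key (a b : ℝ) (ha : 0 < a) :
    (a : ℂ) + (b : ℂ) * Complex.I =
      Complex.exp (2 * (Real.arctan (b / a) : ℂ) * Complex.I) *
        ((a : ℂ) - (b : ℂ) * Complex.I) := by
  set θ := Real.arctan (b / a) with hθ
  have hs : Real.sqrt (1 + (b/a)^2) * Real.sqrt (1 + (b/a)^2) = 1 + (b/a)^2 :=
    Real.mul_self_sqrt (by positivity)
  have hs0 : Real.sqrt (1 + (b/a)^2) ≠ 0 := by positivity
  have hd : a^2 + b^2 ≠ 0 := by positivity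
  have hcos : Real.cos (2*θ) = (a^2 - b^2)/(a^2 + b^2) := by
    rw [Real.cos_two_mul, hθ, Real.cos_arctan]
    field_simp
    rw [Real.sq_sqrt (by positivity)]
    field_simp
    ring
  have hsin : Real.sin (2*θ) = 2*a*b/(a^2 + b^2) := by
    rw [Real.sin_two_mul, hθ, Real.sin_arctan, Real.cos_arctan]
    field_simp
    rw [Real.sq_sqrt (by positivity)]
    field_simp
  have hexp : Complex.exp (2 * (θ:ℂ) * Complex.I)
      = ((Real.cos (2*θ) : ℝ) : ℂ) + ((Real.sin (2*θ) : ℝ) : ℂ) * Complex.I := by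
    rw [show 2 * (θ:ℂ) * Complex.I = ((2*θ : ℝ) : ℂ) * Complex.I by push_cast; ring,
      Complex.exp_mul_I, ← Complex.ofReal_cos, ← Complex.ofReal_sin]
  rw [hexp, hcos, hsin]
  have haC : (a:ℂ)^2 + (b:ℂ)^2 ≠ 0 := by
    exact_mod_cast Complex.ofReal_ne_zero.mpr hd
  push_cast
  field_simp
  linear_combination (2*(a:ℂ)*(b:ℂ)^2) * Complex.I_sq

theorem qrm_logical_phase_relation (m : ℕ) (hm : 2 ≤ m) (φ : ℝ) :
    (1 : ℂ) + ((2 ^ m - 1 : ℝ) : ℂ) *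
        Complex.exp (-Complex.I * ((2 ^ (m - 1) * φ : ℝ) : ℂ)) =
      Complex.exp (-Complex.I *
          ((φ - 2 * Real.arctan (Real.sin (2 ^ (m - 1) * φ) /
            ((2 ^ m - 1) + Real.cos (2 ^ (m - 1) * φ))) : ℝ) : ℂ)) *
        (Complex.exp (-Complex.I * (((2 ^ m - 1 : ℝ) * φ : ℝ) : ℂ)) +
          ((2 ^ m - 1 : ℝ) : ℂ) *
            Complex.exp (-Complex.I * ((2 ^ (m - 1) * φ - φ : ℝ) : ℂ))) := by
  set ψ : ℝ := 2 ^ (m - 1) * φ with hψ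
  set n : ℝ := 2 ^ m - 1 with hn
  set θ : ℝ := Real.arctan (Real.sin ψ / (n + Real.cos ψ)) with hθ
  have h2m : (2:ℝ) ^ m = 2 * 2 ^ (m - 1) := by
    conv_lhs => rw [show m = m - 1 + 1 by omega]
    ring
  have hn3 : (3:ℝ) ≤ n := by
    have : (4:ℝ) ≤ 2 ^ m := by
      calc (4:ℝ) = 2^2 := by norm_num
      _ ≤ 2^m := by exact pow_le_pow_right₀ (by norm_num) hm
    simp only [hn]; linarith
  have ha : 0 < n + Real.cos ψ := by
    have := Real.neg_one_le_cos ψ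
    linarith
  have hkey := qrm_key (n + Real.cos ψ) (Real.sin ψ) ha
  have hnφ : n * φ = 2 * ψ - φ := by rw [hn, hψ, h2m]; ring
  have hv' : Complex.exp ((ψ:ℂ) * Complex.I)
      = ((Real.cos ψ : ℝ) : ℂ) + ((Real.sin ψ : ℝ) : ℂ) * Complex.I := by
    rw [Complex.exp_mul_I, ← Complex.ofReal_cos, ← Complex.ofReal_sin]
  have hv : Complex.exp (-(ψ:ℂ) * Complex.I)
      = ((Real.cos ψ : ℝ) : ℂ) - ((Real.sin ψ : ℝ) : ℂ) * Complex.I := by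
    rw [show -(ψ:ℂ) = ((-ψ : ℝ) : ℂ) by push_cast; ring, Complex.exp_mul_I,
      ← Complex.ofReal_cos, ← Complex.ofReal_sin, Real.cos_neg, Real.sin_neg]
    push_cast; ring
  have hkey' : (n:ℂ) + Complex.exp ((ψ:ℂ) * Complex.I)
      = Complex.exp (2 * (θ:ℂ) * Complex.I) *
        ((n:ℂ) + Complex.exp (-(ψ:ℂ) * Complex.I)) := by
    rw [hv', hv]
    rw [Complex.ofReal_add, ← hθ] at hkey
    linear_combination hkey
  have h1 : Complex.exp (-(φ:ℂ) * Complex.I) * Complex.exp ((φ:ℂ) * Complex.I) = 1 := by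
    rw [← Complex.exp_add]; ring_nf; exact Complex.exp_zero
  have h2 : Complex.exp (-(ψ:ℂ) * Complex.I) * Complex.exp ((ψ:ℂ) * Complex.I) = 1 := by
    rw [← Complex.exp_add]; ring_nf; exact Complex.exp_zero
  have E1 : -Complex.I * ((φ - 2*θ : ℝ) : ℂ) = (-(φ:ℂ) * Complex.I) + 2 * (θ:ℂ) * Complex.I := by
    push_cast; ring
  have E2 : -Complex.I * ((n * φ : ℝ) : ℂ)
      = (-(ψ:ℂ) * Complex.I) + ((-(ψ:ℂ) * Complex.I) + (φ:ℂ) * Complex.I) := by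
    rw [hnφ]; push_cast; ring
  have E3 : -Complex.I * ((ψ - φ : ℝ) : ℂ) = (-(ψ:ℂ) * Complex.I) + (φ:ℂ) * Complex.I := by
    push_cast; ring
  have E4 : -Complex.I * ((ψ : ℝ) : ℂ) = -(ψ:ℂ) * Complex.I := by ring
  rw [E1, E2, E3, E4]; simp only [Complex.exp_add]
  set a1 := Complex.exp (-(φ:ℂ) * Complex.I)
  set a2 := Complex.exp ((φ:ℂ) * Complex.I)
  set v := Complex.exp (-(ψ:ℂ) * Complex.I)
  set v' := Complex.exp ((ψ:ℂ) * Complex.I)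
  set w := Complex.exp (2 * (θ:ℂ) * Complex.I)
  linear_combination -h2 + v * hkey' - w * v * (v + (n:ℂ)) * h1
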